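/- Let f ∈ ℝ[x₁,…,xₙ] be a polynomial of degree at most 2d that vanishes at every point of H. Then there exist polynomials p₁,…,pₙ ∈ ℝ[x₁,…,xₙ], each of degree at most 2d − 2, such that f = Σ_{j=1}^{n} p_j g_j. -/

import Mathlib

open MvPolynomial Finset
open scoped Classical

noncomputable section

/-- A circuit polynomial in `n` variables. -/
def IsCircuitPoly (n : ℕ) (f : MvPolynomial (Fin n) ℝ) : Prop :=
  ∃ (r : ℕ) (α : Fin (r + 1) → (Fin n →₀ ℕ)) (β : Fin n →₀ ℕ)
    (cf : Fin (r + 1) → ℝ) (c : ℝ) (lam : Fin (r + 1) → ℝ),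
    r ≤ n ∧
    (∀ j, 0 < cf j) ∧
    (∀ j i, Even (α j i)) ∧
    AffineIndependent ℝ (fun j (i : Fin n) => ((α j i : ℕ) : ℝ)) ∧
    (∀ j, 0 < lam j) ∧ (∑ j, lam j) = 1 ∧
    (∀ i, ((β i : ℕ) : ℝ) = ∑ j, lam j * ((α j i : ℕ) : ℝ)) ∧
    f = (∑ j, monomial (α j) (cf j)) + monomial β c

/-- A nonnegative circuit polynomial. -/
def IsNNCircuit (n : ℕ) (f : MvPolynomial (Fin n) ℝ) : Prop :=
  IsCircuitPoly n f ∧ ∀ x : Fin n → ℝ, 0 ≤ eval x f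

/-- A sum of nonnegative circuit polynomials (no degree bound). -/
def IsSONC (n : ℕ) (f : MvPolynomial (Fin n) ℝ) : Prop :=
  ∃ (k : ℕ) (μ : Fin k → ℝ) (p : Fin k → MvPolynomial (Fin n) ℝ),
    (∀ i, 0 ≤ μ i) ∧ (∀ i, IsNNCircuit n (p i)) ∧
    f = ∑ i, C (μ i) * p i

/-- A SONC built from nonnegative circuit polynomials of degree at most `D`. -/
def IsSONCOfDeg (n D : ℕ) (f : MvPolynomial (Fin n) ℝ) : Prop :=
  ∃ (k : ℕ) (μ : Fin k → ℝ) (p : Fin k → MvPolynomial (Fin n) ℝ),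
    (∀ i, 0 ≤ μ i) ∧ (∀ i, IsNNCircuit n (p i) ∧ (p i).totalDegree ≤ D) ∧
    f = ∑ i, C (μ i) * p i

/-- The SONC cone `C_{n,D}`. -/
def InSONCCone (n D : ℕ) (f : MvPolynomial (Fin n) ℝ) : Prop :=
  f.totalDegree ≤ D ∧ IsSONCOfDeg n D f

/-- The quadratic hypercube constraint `g_j(x) = (x_j − a_j)(x_j − b_j)`. -/
def gpoly {n : ℕ} (a b : Fin n → ℝ) (j : Fin n) : MvPolynomial (Fin n) ℝ :=
  (X j - C (a j)) * (X j - C (b j))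

/-- The Kronecker delta polynomial `δ_v` of a vertex `v` of the hypercube
`∏_j {a_j, b_j}`. -/
def kron {n : ℕ} (a b : Fin n → ℝ) (v : Fin n → ℝ) : MvPolynomial (Fin n) ℝ :=
  ∏ j, if v j = a j then C (1 / (b j - a j)) * (C (b j) - X j)
       else C (1 / (b j - a j)) * (X j - C (a j))

/-- The vertex of the hypercube `∏_j {a_j, b_j}` encoded by `ε : Fin n → Bool`. -/
def vtx {n : ℕ} (a b : Fin n → ℝ) (ε : Fin n → Bool) : Fin n → ℝ :=
  fun j => if ε j then b j else a j

/-- A multilinear polynomial vanishing on the hypercube is zero. -/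
lemma multilinear_vanish_zero : ∀ (n : ℕ) (a b : Fin n → ℝ), (∀ j, a j ≠ b j) →
    ∀ f : MvPolynomial (Fin n) ℝ,
    (∀ m ∈ f.support, ∀ j, m j ≤ 1) →
    (∀ x : Fin n → ℝ, (∀ j, x j = a j ∨ x j = b j) → eval x f = 0) → f = 0 := by
  intro n
  induction n with
  | zero =>
    intro a b hab f hml hv
    have h0 := hv a (fun j => j.elim0)
    rw [MvPolynomial.eq_C_of_isEmpty f] at h0 ⊢
    simp only [eval_C] at h0
    rw [h0, map_zero]
  | succ n ih =>
    intro a b hab f hml hv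
    have key : ∀ x : Fin n → ℝ, (∀ j, x j = a (Fin.succ j) ∨ x j = b (Fin.succ j)) →
        Polynomial.map (eval x) (MvPolynomial.finSuccEquiv ℝ n f) = 0 := by
      intro x hx
      set P := Polynomial.map (eval x) (MvPolynomial.finSuccEquiv ℝ n f) with hP
      have hdeg : P.natDegree ≤ 1 := by
        refine le_trans (Polynomial.natDegree_map_le) ?_
        rw [MvPolynomial.natDegree_finSuccEquiv]
        exact MvPolynomial.degreeOf_le_iff.mpr (fun m hm => hml m hm 0)
      have heval : ∀ t : ℝ, (t = a 0 ∨ t = b 0) → Polynomial.eval t P = 0 := by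
        intro t ht
        rw [hP, ← MvPolynomial.eval_eq_eval_mv_eval']
        apply hv
        intro j
        refine Fin.cases ?_ ?_ j
        · simpa using ht
        · intro i; simpa using hx i
      have hrep := Polynomial.eq_X_add_C_of_natDegree_le_one hdeg
      have ea := heval (a 0) (Or.inl rfl)
      have eb := heval (b 0) (Or.inr rfl)
      rw [hrep] at ea eb
      simp only [Polynomial.eval_add, Polynomial.eval_mul, Polynomial.eval_C,
        Polynomial.eval_X] at ea eb
      have h1 : P.coeff 1 = 0 := by
        have hne : a 0 - b 0 ≠ 0 := sub_ne_zero.mpr (hab 0)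
        have : P.coeff 1 * (a 0 - b 0) = 0 := by ring_nf; linarith
        rcases mul_eq_zero.mp this with h | h
        · exact h
        · exact absurd h hne
      have h0 : P.coeff 0 = 0 := by rw [h1] at ea; linarith
      rw [hrep, h1, h0]; simp
    have hcoeff : ∀ i, (MvPolynomial.finSuccEquiv ℝ n f).coeff i = 0 := by
      intro i
      apply ih (fun j => a (Fin.succ j)) (fun j => b (Fin.succ j)) (fun j => hab (Fin.succ j))
      · intro m hm j
        rw [MvPolynomial.mem_support_iff, MvPolynomial.finSuccEquiv_coeff_coeff] at hm
        have := hml _ (MvPolynomial.mem_support_iff.mpr hm) (Fin.succ j)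
        simpa [Finsupp.cons_succ] using this
      · intro x hx
        have hmap := key x hx
        have := congrArg (fun Q => Polynomial.coeff Q i) hmap
        simpa [Polynomial.coeff_map] using this
    have hzero : MvPolynomial.finSuccEquiv ℝ n f = 0 := Polynomial.ext fun i => by
      rw [hcoeff i]; simp
    exact (map_eq_zero_iff _ (AlgEquiv.injective _)).mp hzero

/-- Excess of a monomial: total degree beyond multilinear. -/
def excess {n : ℕ} (m : Fin n →₀ ℕ) : ℕ := ∑ k ∈ m.support, (m k - 1)

lemma excess_eq_of_subset {n : ℕ} (m : Fin n →₀ ℕ) (s : Finset (Fin n))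
    (hs : m.support ⊆ s) : excess m = ∑ k ∈ s, (m k - 1) := by
  refine Finset.sum_subset hs ?_
  intro k _ hk
  have : m k = 0 := Finsupp.notMem_support_iff.mp hk
  omega

lemma excess_lt_aux {n : ℕ} (m m2 : Fin n →₀ ℕ) (j : Fin n) (hj : 2 ≤ m j)
    (hsub : m2.support ⊆ m.support) (hjval : m2 j + 1 ≤ m j)
    (hoff : ∀ k, k ≠ j → m2 k = m k) :
    excess m2 + 1 ≤ excess m := by
  have hjmem : j ∈ m.support := Finsupp.mem_support_iff.mpr (by omega)
  have hs : ∑ k ∈ m.support.erase j, (m2 k - 1) = ∑ k ∈ m.support.erase j, (m k - 1) :=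
    Finset.sum_congr rfl (fun k hk => by rw [hoff k (Finset.mem_erase.mp hk).1])
  have h1 : excess m2 = (m2 j - 1) + ∑ k ∈ m.support.erase j, (m2 k - 1) := by
    rw [excess_eq_of_subset m2 _ hsub, ← Finset.add_sum_erase _ _ hjmem]
  have h2 : excess m = (m j - 1) + ∑ k ∈ m.support.erase j, (m k - 1) := by
    unfold excess
    rw [← Finset.add_sum_erase _ _ hjmem]
  omega

lemma one_le_excess {n : ℕ} (m : Fin n →₀ ℕ) (j : Fin n) (hj : 2 ≤ m j) :
    1 ≤ excess m := by
  have hjmem : j ∈ m.support := Finsupp.mem_support_iff.mpr (by omega)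
  calc 1 ≤ m j - 1 := by omega
    _ ≤ ∑ k ∈ m.support, (m k - 1) :=
        Finset.single_le_sum (f := fun k => m k - 1) (fun k _ => Nat.zero_le _) hjmem

/-- The measure used in the well-founded reduction. -/
def mu {n : ℕ} (f : MvPolynomial (Fin n) ℝ) : ℕ := ∑ m ∈ f.support, 4 ^ excess m

lemma mu_add_monomial_le {n : ℕ} (g : MvPolynomial (Fin n) ℝ) (m : Fin n →₀ ℕ) (c : ℝ) :
    mu (g + monomial m c) ≤ mu g + 4 ^ excess m := by
  have hsub : (g + monomial m c).support ⊆ insert m g.support := by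
    refine subset_trans (MvPolynomial.support_add) ?_
    intro m' hm'
    rcases Finset.mem_union.mp hm' with h | h
    · exact Finset.mem_insert_of_mem h
    · have := MvPolynomial.support_monomial_subset h
      rw [Finset.mem_singleton.mp this]
      exact Finset.mem_insert_self m _
  calc mu (g + monomial m c) ≤ ∑ m' ∈ insert m g.support, 4 ^ excess m' :=
        Finset.sum_le_sum_of_subset hsub
    _ ≤ 4 ^ excess m + mu g := by
        by_cases hmem : m ∈ g.support
        · rw [Finset.insert_eq_self.mpr hmem]; exact Nat.le_add_left _ _
        · rw [Finset.sum_insert hmem]; rfl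
    _ = mu g + 4 ^ excess m := by ring

lemma mu_sub_monomial {n : ℕ} (f : MvPolynomial (Fin n) ℝ) (m : Fin n →₀ ℕ)
    (hm : m ∈ f.support) :
    mu (f - monomial m (coeff m f)) + 4 ^ excess m = mu f := by
  have hsupp : (f - monomial m (coeff m f)).support = f.support.erase m := by
    ext m'
    simp only [MvPolynomial.mem_support_iff, Finset.mem_erase, coeff_sub, coeff_monomial]
    by_cases h : m' = m
    · subst h; simp
    · have h' : m ≠ m' := fun hh => h hh.symm
      simp [h, h']
  rw [mu, hsupp]
  exact Finset.sum_erase_add _ _ hm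

lemma gpoly_totalDegree_le {n : ℕ} (a b : Fin n → ℝ) (j : Fin n) :
    (gpoly a b j).totalDegree ≤ 2 := by
  have h : ∀ r : ℝ, ((X j - C r : MvPolynomial (Fin n) ℝ)).totalDegree ≤ 1 := by
    intro r
    refine le_trans (totalDegree_sub _ _) ?_
    simp [totalDegree_X]
  unfold gpoly
  refine le_trans (totalDegree_mul _ _) ?_
  have h1 := h (a j)
  have h2 := h (b j)
  omega

/-- Main reduction lemma, by strong induction on the measure `mu`. -/
lemma hypercube_reduction (n d : ℕ) (a b : Fin n → ℝ) (hab : ∀ j, a j < b j) :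
    ∀ N (f : MvPolynomial (Fin n) ℝ), mu f ≤ N → f.totalDegree ≤ 2 * d →
    (∀ x : Fin n → ℝ, (∀ j, x j = a j ∨ x j = b j) → eval x f = 0) →
    ∃ p : Fin n → MvPolynomial (Fin n) ℝ,
      (∀ j, (p j).totalDegree ≤ 2 * d - 2) ∧ f = ∑ j, p j * gpoly a b j := by
  intro N
  induction N with
  | zero =>
    intro f hmu hdeg hv
    have hml : ∀ m ∈ f.support, ∀ j, m j ≤ 1 := by
      intro m hm j
      exfalso
      have h0 : mu f = 0 := Nat.le_zero.mp hmu
      have := (Finset.sum_eq_zero_iff.mp h0) m hm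
      exact pow_ne_zero _ (by norm_num : (4:ℕ) ≠ 0) this
    have hf0 : f = 0 := multilinear_vanish_zero n a b (fun j => (hab j).ne) f hml hv
    exact ⟨0, fun j => by simp, by simp [hf0]⟩
  | succ N ih =>
    intro f hmu hdeg hv
    by_cases hml : ∀ m ∈ f.support, ∀ j, m j ≤ 1
    · have hf0 : f = 0 := multilinear_vanish_zero n a b (fun j => (hab j).ne) f hml hv
      exact ⟨0, fun j => by simp, by simp [hf0]⟩
    · push_neg at hml
      obtain ⟨m, hm, j, hj⟩ := hml
      replace hj : 2 ≤ m j := by omega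
      set c := coeff m f with hc
      set m' : Fin n →₀ ℕ := m - Finsupp.single j 2 with hm'def
      set m1 : Fin n →₀ ℕ := m' + Finsupp.single j 1 with hm1def
      have hm'app : ∀ k, m' k = m k - (Finsupp.single j 2) k :=
        fun k => Finsupp.tsub_apply _ _ _
      have hm'j : m' j = m j - 2 := by rw [hm'app]; simp
      have hm'off : ∀ k, k ≠ j → m' k = m k := by
        intro k hk
        rw [hm'app, Finsupp.single_apply, if_neg (fun h => hk h.symm)]
        omega
      have hm1j : m1 j = m j - 2 + 1 := by
        rw [hm1def, Finsupp.add_apply, hm'j, Finsupp.single_eq_same]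
      have hm1off : ∀ k, k ≠ j → m1 k = m k := by
        intro k hk
        rw [hm1def, Finsupp.add_apply, hm'off k hk, Finsupp.single_apply,
          if_neg (fun h => hk h.symm), add_zero]
      have hadd : m' + Finsupp.single j 2 = m := by
        rw [hm'def]
        exact tsub_add_cancel_of_le (Finsupp.single_le_iff.mpr hj)
      -- support inclusions
      have hsub' : m'.support ⊆ m.support := by
        intro k hk
        rw [Finsupp.mem_support_iff] at hk ⊢
        by_cases hkj : k = j
        · subst hkj; omega
        · rw [hm'off k hkj] at hk; exact hk
      have hsub1 : m1.support ⊆ m.support := by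
        intro k hk
        rw [Finsupp.mem_support_iff] at hk ⊢
        by_cases hkj : k = j
        · subst hkj; omega
        · rw [hm1off k hkj] at hk; exact hk
      -- excess estimates
      have he := one_le_excess m j hj
      have he' : excess m' + 1 ≤ excess m :=
        excess_lt_aux m m' j hj hsub' (by omega) hm'off
      have he1 : excess m1 + 1 ≤ excess m :=
        excess_lt_aux m m1 j hj hsub1 (by omega) hm1off
      -- degree facts
      have hmsum : (m.sum fun _ e => e) ≤ 2 * d := le_trans (le_totalDegree hm) hdeg
      have hsum2 : (m'.sum fun _ e => e) + 2 = m.sum fun _ e => e := by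
        conv_rhs => rw [← hadd]
        rw [Finsupp.sum_add_index' (fun _ => rfl) (fun _ _ _ => rfl),
          Finsupp.sum_single_index rfl]
      have hideq : (m'.sum fun _ => (id : ℕ → ℕ)) = m'.sum fun _ e => e := rfl
      have hqdeg : (monomial m' c : MvPolynomial (Fin n) ℝ).totalDegree ≤ 2 * d - 2 := by
        refine le_trans (totalDegree_monomial_le _ _) (by omega)
      -- the product expansion
      have expand : gpoly a b j = X j * X j - C (a j + b j) * X j + C (a j * b j) := by
        unfold gpoly
        rw [map_add, map_mul]
        ring
      have e2 : (monomial m' c : MvPolynomial (Fin n) ℝ) * (X j * X j) = monomial m c := by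
        rw [← hadd, monomial_add_single]
        ring
      have e1 : (monomial m1 c : MvPolynomial (Fin n) ℝ) = monomial m' c * X j := by
        rw [hm1def, monomial_add_single, pow_one]
      have hqg : (monomial m' c : MvPolynomial (Fin n) ℝ) * gpoly a b j
          = monomial m c - monomial m1 ((a j + b j) * c) + monomial m' (a j * b j * c) := by
        have eB : (monomial m1 ((a j + b j) * c) : MvPolynomial (Fin n) ℝ)
            = C (a j + b j) * (monomial m' c * X j) := by
          rw [← e1, C_mul_monomial]
        have eC : (monomial m' (a j * b j * c) : MvPolynomial (Fin n) ℝ)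
            = C (a j * b j) * monomial m' c := by
          rw [C_mul_monomial]
        rw [expand, eB, eC, ← e2]
        ring
      set f' := f - monomial m' c * gpoly a b j with hf'def
      have hf'2 : f' = ((f - monomial m c) + monomial m1 ((a j + b j) * c))
          + monomial m' (-(a j * b j * c)) := by
        have nC : (monomial m' (-(a j * b j * c)) : MvPolynomial (Fin n) ℝ)
            = -(monomial m' (a j * b j * c)) := by
          rw [map_neg]
        rw [hf'def, hqg, nC]
        abel
      -- mu decreases
      have hmusub := mu_sub_monomial f m hm
      rw [← hc] at hmusub
      have hmu2 : mu f' ≤ mu (f - monomial m c) + 4 ^ excess m1 + 4 ^ excess m' := by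
        rw [hf'2]
        refine le_trans (mu_add_monomial_le _ _ _) ?_
        have := mu_add_monomial_le (f - monomial m c) m1 ((a j + b j) * c)
        omega
      have hpow : 4 ^ excess m1 + 4 ^ excess m' < 4 ^ excess m := by
        have h4 : 4 ^ excess m1 ≤ 4 ^ (excess m - 1) :=
          Nat.pow_le_pow_right (by norm_num) (by omega)
        have h5 : 4 ^ excess m' ≤ 4 ^ (excess m - 1) :=
          Nat.pow_le_pow_right (by norm_num) (by omega)
        have h6 : 4 ^ (excess m - 1) * 4 = 4 ^ excess m := by
          rw [← pow_succ]
          congr 1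
          omega
        have h7 : 0 < 4 ^ (excess m - 1) := Nat.pow_pos (by norm_num)
        omega
      have hmuf' : mu f' ≤ N := by omega
      -- degree of f'
      have htdeg : (monomial m' c * gpoly a b j).totalDegree ≤ 2 * d := by
        refine le_trans (totalDegree_mul _ _) ?_
        have h1 := totalDegree_monomial_le m' c
        have h2 := gpoly_totalDegree_le a b j
        omega
      have hf'deg : f'.totalDegree ≤ 2 * d :=
        le_trans (totalDegree_sub _ _) (max_le hdeg htdeg)
      -- vanishing of f'
      have hf'van : ∀ x : Fin n → ℝ, (∀ k, x k = a k ∨ x k = b k) → eval x f' = 0 := by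
        intro x hx
        have hg0 : eval x (gpoly a b j) = 0 := by
          unfold gpoly
          rcases hx j with h | h <;> simp [h]
        rw [hf'def, map_sub, map_mul, hg0, mul_zero, sub_zero]
        exact hv x hx
      obtain ⟨p', hp'1, hp'2⟩ := ih f' hmuf' hf'deg hf'van
      refine ⟨fun k => p' k + if k = j then monomial m' c else 0, ?_, ?_⟩
      · intro k
        refine le_trans (totalDegree_add _ _) (max_le (hp'1 k) ?_)
        by_cases hkj : k = j
        · simpa [hkj] using hqdeg
        · simp [hkj]
      · have hsplit : ∑ k, (p' k + if k = j then (monomial m' c : MvPolynomial (Fin n) ℝ)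
            else 0) * gpoly a b k
            = (∑ k, p' k * gpoly a b k)
              + ∑ k, (if k = j then (monomial m' c : MvPolynomial (Fin n) ℝ) else 0)
                * gpoly a b k := by
          rw [← Finset.sum_add_distrib]
          exact Finset.sum_congr rfl (fun k _ => by ring)
        rw [hsplit, ← hp'2]
        have hsum : ∑ k, (if k = j then (monomial m' c : MvPolynomial (Fin n) ℝ) else 0)
            * gpoly a b k = monomial m' c * gpoly a b j := by
          rw [Finset.sum_eq_single j]
          · rw [if_pos rfl]
          · intro k _ hk
            rw [if_neg hk, zero_mul]
          · intro h
            exact absurd (Finset.mem_univ j) h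
        rw [hsum, hf'def]
        ring

/-- If `f` has degree at most `2d` and vanishes at every point of
the hypercube `H`, then `f = Σ_j p_j g_j` for some polynomials `p_j` of degree
at most `2d − 2`. -/
theorem vanishing_on_hypercube_ideal_representation
    (n d : ℕ) (a b : Fin n → ℝ) (hab : ∀ j, a j < b j)
    (f : MvPolynomial (Fin n) ℝ) (hdeg : f.totalDegree ≤ 2 * d)
    (hvan : ∀ x : Fin n → ℝ, (∀ j, x j = a j ∨ x j = b j) → eval x f = 0) :
    ∃ p : Fin n → MvPolynomial (Fin n) ℝ,
      (∀ j, (p j).totalDegree ≤ 2 * d - 2) ∧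
      f = ∑ j, p j * gpoly a b j := by
  exact hypercube_reduction n d a b hab (mu f) f le_rfl hdeg hvan
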